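/- For every t with 0 ≤ t < 1/6, the derivative of z₂ satisfies z₂′(t) = (2·a(t)·z₁(t))/(q(t)·c(t)) − (5·d(t)·z₂(t))/(3·q(t)·c(t)) − (3·a(t)·z₂(t)²)/(q(t)·c(t)) − (y(t)·z₂(t))/q(t). -/

import Mathlib

noncomputable def pFun (t : ℝ) : ℝ := 1 - 6 * t

noncomputable def rFun (s t : ℝ) : ℝ := Real.exp (-(7776 / 25) * (1 - s) ^ 2 * t ^ 3)

noncomputable def qFun (t : ℝ) : ℝ := pFun t ^ 3 / 6

noncomputable def yFun (t : ℝ) : ℝ := pFun t ^ 2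

noncomputable def aFun (s t : ℝ) : ℝ := (5 / 6) * s * (1 - s) ^ 2 * pFun t ^ 5 * rFun s t ^ 2

noncomputable def c1Fun (s t : ℝ) : ℝ := (5 / 6) * s * (1 - s) * pFun t ^ 2 * rFun s t

noncomputable def c2Fun (s t : ℝ) : ℝ := (5 / 6) * (1 - s) ^ 2 * pFun t ^ 3 * rFun s t ^ 2

noncomputable def cFun (s t : ℝ) : ℝ := c1Fun s t * c2Fun s t

noncomputable def dFun (s t : ℝ) : ℝ := (5 / 6) * s * (1 - s) ^ 3 * pFun t ^ 7 * rFun s t ^ 3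

noncomputable def z0Fun (s t : ℝ) : ℝ := (5 / 6) * (1 - s) ^ 5 * pFun t ^ 9 * rFun s t ^ 3

noncomputable def z1Fun (s t : ℝ) : ℝ := (1 - s) ^ 4 * (1 - pFun t) * pFun t ^ 6 * rFun s t ^ 2

noncomputable def z2Fun (s t : ℝ) : ℝ :=
  (6 / 5) * (1 - s) ^ 3 * (1 - pFun t) ^ 2 * pFun t ^ 3 * rFun s t

theorem z2_hasDerivAt (s : ℝ) (hs0 : 0 < s) (hs1 : s < 1) (t : ℝ)
    (ht0 : 0 ≤ t) (ht : t < 1 / 6) :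
    HasDerivAt (z2Fun s)
      ((2 * aFun s t * z1Fun s t) / (qFun t * cFun s t)
        - (5 * dFun s t * z2Fun s t) / (3 * qFun t * cFun s t)
        - (3 * aFun s t * z2Fun s t ^ 2) / (qFun t * cFun s t)
        - (yFun t * z2Fun s t) / qFun t) t := by
  have hp : (0:ℝ) < 1 - 6 * t := by linarith
  have hpne : pFun t ≠ 0 := ne_of_gt hp
  have hr : rFun s t ≠ 0 := Real.exp_ne_zero _
  have hsne : s ≠ 0 := ne_of_gt hs0
  have hs1ne : (1:ℝ) - s ≠ 0 := sub_ne_zero_of_ne (ne_of_gt hs1)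
  have hpd : HasDerivAt pFun (-6) t := by
    have := ((hasDerivAt_id t).const_mul (6:ℝ)).const_sub 1
    unfold pFun
    convert this using 1
    · rfl
    · rfl
    · simp
    · simp
  have hinner : HasDerivAt (fun x : ℝ => -(7776 / 25) * (1 - s) ^ 2 * x ^ 3)
      (-(7776 / 25) * (1 - s) ^ 2 * (3 * t ^ 2)) t := by
    have := (hasDerivAt_pow 3 t).const_mul (-(7776 / 25) * (1 - s) ^ 2)
    convert this using 1
    · rfl
    · rfl
    · norm_num
  have hrd : HasDerivAt (rFun s)
      (rFun s t * (-(7776 / 25) * (1 - s) ^ 2 * (3 * t ^ 2))) t := by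
    have := hinner.exp
    exact this
  have h1 : HasDerivAt (fun x => (1 - pFun x) ^ 2)
      ((2 : ℕ) * (1 - pFun t) ^ 1 * (- -6)) t := (hpd.const_sub 1).pow 2
  have h2 : HasDerivAt (fun x => pFun x ^ 3)
      ((3 : ℕ) * pFun t ^ 2 * (-6)) t := hpd.pow 3
  have hz : HasDerivAt (z2Fun s)
      ((((6 / 5) * (1 - s) ^ 3 * ((2 : ℕ) * (1 - pFun t) ^ 1 * (- -6)) * pFun t ^ 3
          + (6 / 5) * (1 - s) ^ 3 * (1 - pFun t) ^ 2 * ((3 : ℕ) * pFun t ^ 2 * (-6)))) * rFun s t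
        + (6 / 5) * (1 - s) ^ 3 * (1 - pFun t) ^ 2 * pFun t ^ 3
            * (rFun s t * (-(7776 / 25) * (1 - s) ^ 2 * (3 * t ^ 2)))) t := by
    exact ((h1.const_mul ((6 / 5) * (1 - s) ^ 3)).mul h2).mul hrd
  convert hz using 1
  have h1p : 1 - pFun t = 6 * t := by simp [pFun]
  simp only [aFun, z1Fun, z2Fun, qFun, cFun, c1Fun, c2Fun, dFun, yFun, h1p]
  push_cast
  field_simp
  ring
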